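/- Let G be a directed cycle of length N on [N] (that is, K_i = {π(i)} for all i, where π is a permutation of [N] consisting of a single N-cycle) and let F_q be any finite field. A vector r = (r_1,...,r_N) of strictly positive integers is feasible for G at rate N−1 through scalar linear coding over F_q — i.e., there exists a valid scalar linear index code for G over F_q with codelength at most N−1 and |R_i| ≤ r_i for every i — if and only if ∑_{i∈[N]} r_i ≥ 2(N−1). -/

import Mathlib

open Finset Submodule Module

section IndexCodingHelpers

lemma cardLe_of_indep_mem_span {q : Type} [Field q] {n : ℕ} {ι κ : Type} [Fintype ι] [Fintype κ]
    (w : ι → (Fin n → q)) (cols : κ → (Fin n → q))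
    (hw : LinearIndependent q w) (h : ∀ i, w i ∈ Submodule.span q (Set.range cols)) :
    Fintype.card ι ≤ Fintype.card κ := by
  haveI : Module.Finite q (Submodule.span q (Set.range cols)) :=
    Module.Finite.span_of_finite q (Set.finite_range cols)
  have hw' : LinearIndependent q
      (fun i => (⟨w i, h i⟩ : Submodule.span q (Set.range cols))) := by
    apply LinearIndependent.of_comp (Submodule.span q (Set.range cols)).subtype
    convert hw
    rfl
  calc Fintype.card ι ≤ finrank q (Submodule.span q (Set.range cols)) :=
        hw'.fintype_card_le_finrank
    _ ≤ Fintype.card κ := finrank_range_le_card cols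

lemma card_subtype_ne' {α : Type} [Fintype α] [DecidableEq α] (a : α) :
    Fintype.card {x : α // x ≠ a} = Fintype.card α - 1 := by
  rw [Fintype.card_subtype]
  rw [Finset.filter_ne']
  rw [Finset.card_erase_of_mem (Finset.mem_univ a), Finset.card_univ]


lemma cycle_chase {q : Type} [Field q] {N : ℕ} (π : Equiv.Perm (Fin N)) (hπ : π.IsCycle)
    (hπsupp : π.support = Finset.univ)
    (v : Fin N → Fin N → q) (hv1 : ∀ i, v i i = 1)
    (hv0 : ∀ i j, j ≠ i → j ≠ π i → v i j = 0)
    (c : Fin N → q) (hc : ∑ i, c i • v i = 0) (i₀ : Fin N) (hc0 : c i₀ = 0)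
    (x : Fin N) : c x = 0 := by
  have hne : ∀ i, π i ≠ i := fun i =>
    Equiv.Perm.mem_support.mp (by rw [hπsupp]; exact Finset.mem_univ i)
  have hcoord : ∀ jj : Fin N, c jj + c (π.symm jj) * v (π.symm jj) jj = 0 := by
    intro jj
    have h1 : ∑ i, c i * v i jj = 0 := by
      have h := congrFun hc jj
      simpa using h
    have hnejj : jj ≠ π.symm jj := by
      intro h
      have h2 := congrArg π h
      rw [Equiv.apply_symm_apply] at h2
      exact hne jj h2
    have hsub : ∑ i ∈ ({jj, π.symm jj} : Finset (Fin N)), c i * v i jj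
        = ∑ i, c i * v i jj := by
      apply Finset.sum_subset (Finset.subset_univ _)
      intro i _ hi
      simp only [Finset.mem_insert, Finset.mem_singleton, not_or] at hi
      have h2 : jj ≠ π i := by
        intro h
        apply hi.2
        rw [h, Equiv.symm_apply_apply]
      rw [hv0 i jj (Ne.symm hi.1) h2, mul_zero]
    rw [← hsub, Finset.sum_pair hnejj, hv1 jj, mul_one] at h1
    exact h1
  have hpow : ∀ k : ℕ, c ((π ^ k) i₀) = 0 := by
    intro k
    induction k with
    | zero => simpa using hc0
    | succ n ih =>
      have h := hcoord ((π ^ (n + 1)) i₀)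
      have hsymm : π.symm ((π ^ (n + 1)) i₀) = (π ^ n) i₀ := by
        rw [pow_succ']
        simp [Equiv.Perm.mul_apply]
      rw [hsymm, ih, zero_mul, add_zero] at h
      exact h
  obtain ⟨k, hk⟩ := hπ.exists_pow_eq (hne i₀) (hne x)
  rw [← hk]
  exact hpow k

lemma cycle_indep {q : Type} [Field q] {N : ℕ} (π : Equiv.Perm (Fin N)) (hπ : π.IsCycle)
    (hπsupp : π.support = Finset.univ)
    (v : Fin N → Fin N → q) (hv1 : ∀ i, v i i = 1)
    (hv0 : ∀ i j, j ≠ i → j ≠ π i → v i j = 0) (i₀ : Fin N) :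
    LinearIndependent q (fun i : {i : Fin N // i ≠ i₀} => v i) := by
  rw [Fintype.linearIndependent_iff]
  intro g hg i
  classical
  set c : Fin N → q := fun x => if h : x = i₀ then 0 else g ⟨x, h⟩ with hcdef
  have hgc : ∀ i : {i : Fin N // i ≠ i₀}, c ↑i = g i := by
    intro i
    simp only [hcdef]
    rw [dif_neg i.2]
  have hsum : ∑ x, c x • v x = 0 := by
    have h1 : ∑ x, c x • v x = ∑ x ∈ Finset.univ.erase i₀, c x • v x :=
      (Finset.sum_erase _ (by simp [hcdef])).symm
    have h2 : ∑ x ∈ Finset.univ.erase i₀, c x • v x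
        = ∑ i : {i : Fin N // i ≠ i₀}, c ↑i • v ↑i := by
      apply Finset.sum_subtype
      intro x
      simp
    rw [h1, h2, ← hg]
    exact Finset.sum_congr rfl fun i _ => by rw [hgc]
  have h := cycle_chase π hπ hπsupp v hv1 hv0 c hsum i₀ (by simp [hcdef]) ↑i
  rwa [hgc] at h

end IndexCodingHelpers

/-- A valid scalar linear index code for the problem with side information sets `K`. -/
def ValidScalarCode {N ℓ : ℕ} (q : Type) [Field q]
    (K : Fin N → Finset (Fin N))
    (L : Matrix (Fin N) (Fin ℓ) q)
    (R : Fin N → Finset (Fin ℓ)) : Prop :=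
  ∀ i : Fin N,
    ∃ u : Fin N → q,
      (∀ j, u j ≠ 0 → j ∈ K i) ∧
      u + Pi.single i 1 ∈ Submodule.span q ((fun k (j : Fin N) => L j k) '' (R i : Set (Fin ℓ)))

/-- Let `G` be a directed cycle of length `N` on `[N]`, i.e. `K i = {π i}`
where `π` is a permutation of `Fin N` consisting of a single `N`-cycle. A vector
`r = (r_1,…,r_N)` of strictly positive integers is feasible at rate `N−1` through scalar
linear coding over `F_q` (there is a valid scalar linear code of codelength at most `N−1`
with `|R_i| ≤ r_i` for all `i`) if and only if `∑_i r_i ≥ 2(N−1)`. -/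
theorem directed_cycle_feasible_localities
    {N : ℕ} (q : Type) [Field q] [Fintype q]
    (π : Equiv.Perm (Fin N)) (hπ : π.IsCycle) (hπsupp : π.support = Finset.univ)
    (r : Fin N → ℕ) (hr : ∀ i, 0 < r i) :
    (∃ (ℓ : ℕ) (L : Matrix (Fin N) (Fin ℓ) q) (R : Fin N → Finset (Fin ℓ)),
        ℓ ≤ N - 1 ∧ ValidScalarCode q (fun i => {π i}) L R ∧ ∀ i, (R i).card ≤ r i)
    ↔ 2 * (N - 1) ≤ ∑ i, r i := by
  have hN : 2 ≤ N := by
    obtain ⟨x₀, hx₀, -⟩ := hπ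
    by_contra hlt
    push_neg at hlt
    interval_cases N
    · exact x₀.elim0
    · exact hx₀ (Subsingleton.elim _ _)
  have hne : ∀ i, π i ≠ i := fun i =>
    Equiv.Perm.mem_support.mp (by rw [hπsupp]; exact Finset.mem_univ i)
  constructor
  · rintro ⟨ℓ, L, R, hℓ, hvalid, hRcard⟩
    classical
    choose u hu hspan using hvalid
    set v : Fin N → Fin N → q := fun i => u i + Pi.single i 1 with hv
    have hv1 : ∀ i, v i i = 1 := by
      intro i
      have h0 : u i i = 0 := by
        by_contra h
        have := hu i i h
        simp only [Finset.mem_singleton] at this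
        exact hne i this.symm
      simp [hv, h0]
    have hv0 : ∀ i j, j ≠ i → j ≠ π i → v i j = 0 := by
      intro i j h1 h2
      have h0 : u i j = 0 := by
        by_contra h
        have := hu i j h
        simp only [Finset.mem_singleton] at this
        exact h2 this
      simp [hv, h0, Pi.single_eq_of_ne h1]
    set cols : Fin ℓ → (Fin N → q) := fun k j => L j k with hcols
    have hmem : ∀ i, v i ∈ Submodule.span q (cols '' (R i : Set (Fin ℓ))) := hspan
    have hmemR : ∀ i, v i ∈ Submodule.span q (Set.range cols) := fun i =>
      Submodule.span_mono (Set.image_subset_range _ _) (hmem i)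
    have hN0 : 0 < N := by omega
    set i₀ : Fin N := ⟨0, hN0⟩ with hi₀
    have hindep : ∀ i₁ : Fin N, LinearIndependent q (fun i : {i : Fin N // i ≠ i₁} => v i) :=
      fun i₁ => cycle_indep π hπ hπsupp v hv1 hv0 i₁
    have hNl : N - 1 ≤ ℓ := by
      have h := cardLe_of_indep_mem_span (fun i : {i : Fin N // i ≠ i₀} => v ↑i) cols
        (hindep i₀) (fun i => hmemR ↑i)
      rwa [card_subtype_ne' i₀, Fintype.card_fin, Fintype.card_fin] at h
    -- coefficients
    have hcoef : ∀ i, ∃ l : Fin ℓ →₀ q,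
        (↑l.support ⊆ (R i : Set (Fin ℓ))) ∧ ∑ k, l k • cols k = v i := by
      intro i
      obtain ⟨l, hl1, hl2⟩ := (Finsupp.mem_span_image_iff_linearCombination q).mp (hmem i)
      refine ⟨l, Finsupp.mem_supported q l |>.mp hl1, ?_⟩
      rw [← hl2, Finsupp.linearCombination_apply, Finsupp.sum_fintype]
      intro k
      exact zero_smul _ _
    choose lf hsuppc hsumc using hcoef
    have h2 : ∀ k : Fin ℓ, 2 ≤ (Finset.univ.filter fun i => lf i k ≠ 0).card := by
      intro k
      by_contra hlt
      push_neg at hlt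
      have h1 : (Finset.univ.filter fun i => lf i k ≠ 0).card ≤ 1 := by omega
      have hex : ∃ i₁ : Fin N, ∀ i, i ≠ i₁ → lf i k = 0 := by
        rcases (Finset.univ.filter fun i => lf i k ≠ 0).eq_empty_or_nonempty with he | ⟨i₁, hi₁⟩
        · refine ⟨i₀, fun i _ => ?_⟩
          by_contra h
          have : i ∈ Finset.univ.filter fun i => lf i k ≠ 0 := by simp [h]
          rw [he] at this
          exact absurd this (Finset.notMem_empty i)
        · refine ⟨i₁, fun i hii => ?_⟩
          by_contra h
          have hmem' : i ∈ Finset.univ.filter fun i => lf i k ≠ 0 := by simp [h]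
          exact hii (Finset.card_le_one.mp h1 i hmem' i₁ hi₁)
      obtain ⟨i₁, hi₁⟩ := hex
      set cols' : {k' : Fin ℓ // k' ≠ k} → (Fin N → q) := fun k' => cols ↑k' with hcols'
      have hmem' : ∀ i : {i : Fin N // i ≠ i₁}, v ↑i ∈ Submodule.span q (Set.range cols') := by
        intro i
        have hvi : v ↑i = ∑ k' ∈ Finset.univ.erase k, lf ↑i k' • cols k' := by
          rw [Finset.sum_erase _ (by rw [hi₁ ↑i i.2, zero_smul])]
          exact (hsumc ↑i).symm
        rw [hvi]
        apply Submodule.sum_mem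
        intro k' hk'
        apply Submodule.smul_mem
        apply Submodule.subset_span
        exact ⟨⟨k', (Finset.mem_erase.mp hk').1⟩, rfl⟩
      have h := cardLe_of_indep_mem_span (fun i : {i : Fin N // i ≠ i₁} => v ↑i) cols'
        (hindep i₁) hmem'
      rw [card_subtype_ne' i₁, card_subtype_ne' k, Fintype.card_fin, Fintype.card_fin] at h
      omega
    have hco : ∀ i, (Finset.univ.filter fun k => lf i k ≠ 0).card ≤ (R i).card := by
      intro i
      apply Finset.card_le_card
      intro k hk
      simp only [Finset.mem_filter, Finset.mem_univ, true_and] at hk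
      have : k ∈ (lf i).support := Finsupp.mem_support_iff.mpr hk
      exact_mod_cast hsuppc i this
    have hswap : ∑ k : Fin ℓ, (Finset.univ.filter fun i => lf i k ≠ 0).card
        = ∑ i : Fin N, (Finset.univ.filter fun k => lf i k ≠ 0).card := by
      simp only [Finset.card_filter]
      rw [Finset.sum_comm]
    have key : 2 * ℓ ≤ ∑ i, (R i).card := by
      calc 2 * ℓ = ∑ _k : Fin ℓ, 2 := by simp [mul_comm]
      _ ≤ ∑ k : Fin ℓ, (Finset.univ.filter fun i => lf i k ≠ 0).card :=
          Finset.sum_le_sum fun k _ => h2 k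
      _ = ∑ i : Fin N, (Finset.univ.filter fun k => lf i k ≠ 0).card := hswap
      _ ≤ ∑ i, (R i).card := Finset.sum_le_sum fun i _ => hco i
    have hfin : ∑ i, (R i).card ≤ ∑ i, r i := Finset.sum_le_sum fun i _ => hRcard i
    omega
  · intro htot
    classical
    have hN0 : 0 < N := by omega
    -- sorted (descending) order of r
    set σ : Equiv.Perm (Fin N) := Tuple.sort r with hσ
    set wE : Equiv.Perm (Fin N) := Fin.revPerm.trans σ with hwE
    have hmono : Monotone (r ∘ σ) := Tuple.monotone_sort r
    set d : ℕ → ℕ := fun m => if h : m < N then r (wE ⟨m, h⟩) else 1 with hd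
    have hd1 : ∀ m, 1 ≤ d m := by
      intro m
      rw [hd]
      dsimp only
      split
      · exact hr _
      · exact le_refl 1
    have hdanti : ∀ a b : ℕ, a ≤ b → b < N → d b ≤ d a := by
      intro a b hab hbN
      have haN : a < N := lt_of_le_of_lt hab hbN
      rw [hd]
      dsimp only
      rw [dif_pos haN, dif_pos hbN]
      have hrev : Fin.rev (⟨b, hbN⟩ : Fin N) ≤ Fin.rev ⟨a, haN⟩ :=
        Fin.rev_le_rev.mpr (by exact_mod_cast hab)
      have := hmono hrev
      simpa [hwE, Function.comp] using this
    set A : ℕ → ℕ := fun j => ∑ m ∈ Finset.range (j + 1), d m with hA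
    have hAge : ∀ j, j + 1 ≤ A j := by
      intro j
      calc j + 1 = ∑ _m ∈ Finset.range (j + 1), 1 := by simp
      _ ≤ A j := Finset.sum_le_sum fun m _ => hd1 m
    have hAsucc : ∀ j, A (j + 1) = A j + d (j + 1) := fun j => Finset.sum_range_succ d (j + 1)
    have hdsum : ∑ m ∈ Finset.range N, d m = ∑ i, r i := by
      rw [← Fin.sum_univ_eq_sum_range]
      have h1 : ∀ m : Fin N, d ↑m = r (wE m) := by
        intro m
        rw [hd]
        dsimp only
        rw [dif_pos m.isLt]
      rw [Finset.sum_congr rfl fun m _ => h1 m]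
      exact Fintype.sum_equiv wE _ _ fun m => rfl
    have hpre : ∀ t : ℕ, 1 ≤ t → t ≤ N - 1 → 2 * t ≤ 1 + ∑ m ∈ Finset.range t, d m := by
      intro t ht1 htN
      rcases le_or_gt 2 (d (t - 1)) with h2 | h2
      · have hall : ∀ m ∈ Finset.range t, 2 ≤ d m := by
          intro m hm
          rw [Finset.mem_range] at hm
          exact le_trans h2 (hdanti m (t - 1) (by omega) (by omega))
        have : 2 * t ≤ ∑ m ∈ Finset.range t, d m := by
          calc 2 * t = ∑ _m ∈ Finset.range t, 2 := by simp [mul_comm]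
          _ ≤ _ := Finset.sum_le_sum hall
        omega
      · have hsuffix : ∀ m, t ≤ m → m < N → d m = 1 := by
          intro m hm hmN
          have ha := hdanti (t - 1) m (by omega) hmN
          have hb := hd1 m
          omega
        have hsplit : ∑ m ∈ Finset.range t, d m + ∑ m ∈ Finset.Ico t N, d m
            = ∑ m ∈ Finset.range N, d m := by
          rw [Finset.range_eq_Ico, Finset.range_eq_Ico]
          exact Finset.sum_Ico_consecutive d (m := 0) (n := t) (k := N) (by omega) (by omega)
        have hIco : ∑ m ∈ Finset.Ico t N, d m = N - t := by
          have hone : ∀ m ∈ Finset.Ico t N, d m = 1 := by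
            intro m hm
            rw [Finset.mem_Ico] at hm
            exact hsuffix m hm.1 hm.2
          rw [Finset.sum_congr rfl hone]
          simp
        have htot' : 2 * (N - 1) ≤ ∑ m ∈ Finset.range N, d m := by rw [hdsum]; exact htot
        omega
    -- parent function
    have hwit : ∀ t : ℕ, 1 ≤ t → t ≤ N - 1 → t + (t - 1) ≤ A (t - 1) := by
      intro t ht1 htN
      have h := hpre t ht1 htN
      have hAt : A (t - 1) = ∑ m ∈ Finset.range t, d m := by
        have ht' : t - 1 + 1 = t := by omega
        rw [hA]
        dsimp only
        rw [ht']
      omega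
    have hgex : ∀ t : ℕ, 1 ≤ t → t ≤ N - 1 → ∃ j, t + j ≤ A j :=
      fun t ht1 htN => ⟨t - 1, hwit t ht1 htN⟩
    set g : ℕ → ℕ := fun t => if h : ∃ j, t + j ≤ A j then Nat.find h else 0 with hg
    have hgspec : ∀ t, 1 ≤ t → t ≤ N - 1 →
        (t + g t ≤ A (g t) ∧ g t < t ∧ ∀ j, j < g t → A j < t + j) := by
      intro t ht1 htN
      have h := hgex t ht1 htN
      rw [hg]
      dsimp only
      rw [dif_pos h]
      refine ⟨Nat.find_spec h, ?_, fun j hj => ?_⟩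
      · have := Nat.find_min' h (hwit t ht1 htN)
        omega
      · have := Nat.find_min h hj
        omega
    -- vertex map
    set vtx : ℕ → Fin N := fun j => wE ⟨j % N, Nat.mod_lt j hN0⟩ with hvtx
    have hvtxeq : ∀ j (h : j < N), vtx j = wE ⟨j, h⟩ := by
      intro j h
      rw [hvtx]
      dsimp only
      congr 1
      exact Fin.ext (Nat.mod_eq_of_lt h)
    have hvtxinj : ∀ a b, a < N → b < N → vtx a = vtx b → a = b := by
      intro a b ha hb h
      rw [hvtxeq a ha, hvtxeq b hb] at h
      have := wE.injective h
      simpa using this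
    have hdvtx : ∀ j (h : j < N), d j = r (vtx j) := by
      intro j h
      rw [hvtxeq j h, hd]
      dsimp only
      rw [dif_pos h]
    -- the C matrix
    set C : Matrix (Fin N) (Fin (N - 1)) q := fun i k =>
      if i = vtx ((k : ℕ) + 1) then 1 else if i = vtx (g ((k : ℕ) + 1)) then -1 else 0 with hC
    have hkbound : ∀ k : Fin (N - 1), 1 ≤ (k : ℕ) + 1 ∧ (k : ℕ) + 1 ≤ N - 1 := by
      intro k
      have := k.isLt
      omega
    have hvne : ∀ k : Fin (N - 1), vtx ((k : ℕ) + 1) ≠ vtx (g ((k : ℕ) + 1)) := by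
      intro k
      obtain ⟨hk1, hk2⟩ := hkbound k
      obtain ⟨_, hglt, _⟩ := hgspec ((k : ℕ) + 1) hk1 hk2
      intro h
      have := hvtxinj _ _ (by omega) (by omega) h
      omega
    have hcolsum : ∀ k : Fin (N - 1), ∑ i, C i k = 0 := by
      intro k
      have hsplit : ∀ i, C i k = (if i = vtx ((k : ℕ) + 1) then (1 : q) else 0)
          + (if i = vtx (g ((k : ℕ) + 1)) then -1 else 0) := by
        intro i
        rw [hC]
        dsimp only
        split_ifs with h1 h2 h2
        · exact absurd (h1.symm.trans h2) (hvne k)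
        · norm_num
        · norm_num
        · norm_num
      rw [Finset.sum_congr rfl fun i _ => hsplit i, Finset.sum_add_distrib]
      simp [Finset.sum_ite_eq']
    -- columns of C are linearly independent
    have hCindep : LinearIndependent q (fun k : Fin (N - 1) => fun i => C i k) := by
      rw [Fintype.linearIndependent_iff]
      intro cc hcc
      by_contra hex
      push_neg at hex
      obtain ⟨k₁, hk₁⟩ := hex
      set s : Finset (Fin (N - 1)) := Finset.univ.filter (fun k => cc k ≠ 0) with hs
      have hsne : s.Nonempty := ⟨k₁, by simp [hs, hk₁]⟩
      set kM := s.max' hsne with hkM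
      have hkMne : cc kM ≠ 0 := (Finset.mem_filter.mp (s.max'_mem hsne)).2
      have hmaxz : ∀ k : Fin (N - 1), kM < k → cc k = 0 := by
        intro k hk
        by_contra h0
        have hmem : k ∈ s := by simp [hs, h0]
        exact absurd (s.le_max' k hmem) (not_le.mpr hk)
      have heval := congrFun hcc (vtx ((kM : ℕ) + 1))
      simp only [Finset.sum_apply, Pi.smul_apply, smul_eq_mul, Pi.zero_apply] at heval
      have hsum1 : ∑ k, cc k * C (vtx ((kM : ℕ) + 1)) k = cc kM := by
        rw [Finset.sum_eq_single kM]
        · rw [hC]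
          dsimp only
          rw [if_pos rfl]
          ring
        · intro k _ hkne
          rcases eq_or_ne (cc k) 0 with h0 | h0
          · rw [h0, zero_mul]
          · have hks : k ∈ s := by simp [hs, h0]
            have hkle : k ≤ kM := s.le_max' k hks
            have hklt : (k : ℕ) < (kM : ℕ) := by
              rcases lt_or_eq_of_le hkle with h | h
              · exact h
              · exact absurd h hkne
            obtain ⟨hk1, hk2⟩ := hkbound k
            obtain ⟨_, hglt, _⟩ := hgspec ((k : ℕ) + 1) hk1 hk2
            obtain ⟨hM1, hM2⟩ := hkbound kM
            have hn1 : ¬ (vtx ((kM : ℕ) + 1) = vtx ((k : ℕ) + 1)) := by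
              intro h
              have := hvtxinj _ _ (by omega) (by omega) h
              omega
            have hn2 : ¬ (vtx ((kM : ℕ) + 1) = vtx (g ((k : ℕ) + 1))) := by
              intro h
              have := hvtxinj _ _ (by omega) (by omega) h
              omega
            have hC0 : C (vtx ((kM : ℕ) + 1)) k = 0 := by
              rw [hC]
              dsimp only
              rw [if_neg hn1, if_neg hn2]
            rw [hC0, mul_zero]
        · intro h
          exact absurd (Finset.mem_univ kM) h
      rw [hsum1] at heval
      exact hkMne heval
    -- row support bound
    set Rf : Fin N → Finset (Fin (N - 1)) := fun i => Finset.univ.filter (fun k => C i k ≠ 0) with hRf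
    have hRcard : ∀ i, (Rf i).card ≤ r i := by
      intro i
      set jF : Fin N := wE.symm i with hjF
      have hij : i = vtx (jF : ℕ) := by
        rw [hvtxeq _ jF.isLt]
        rw [hjF]
        simp
      have hdj : d (jF : ℕ) = r i := by
        rw [hdvtx _ jF.isLt, ← hij]
      have hsubset : Rf i ⊆ (Finset.univ.filter fun k : Fin (N - 1) => ((k : ℕ) + 1 = (jF : ℕ)))
          ∪ (Finset.univ.filter fun k : Fin (N - 1) => g ((k : ℕ) + 1) = (jF : ℕ)) := by
        intro k hk
        rw [hRf] at hk
        simp only [Finset.mem_filter, Finset.mem_univ, true_and] at hk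
        simp only [Finset.mem_union, Finset.mem_filter, Finset.mem_univ, true_and]
        obtain ⟨hk1, hk2⟩ := hkbound k
        obtain ⟨_, hglt, _⟩ := hgspec ((k : ℕ) + 1) hk1 hk2
        rw [hC] at hk
        dsimp only at hk
        by_cases h1 : i = vtx ((k : ℕ) + 1)
        · left
          rw [hij] at h1
          exact (hvtxinj _ _ jF.isLt (by omega) h1).symm
        · rw [if_neg h1] at hk
          by_cases h2 : i = vtx (g ((k : ℕ) + 1))
          · right
            rw [hij] at h2
            exact (hvtxinj _ _ jF.isLt (by omega) h2).symm
          · rw [if_neg h2] at hk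
            exact absurd rfl hk
      have hcard := Finset.card_le_card hsubset
      have hcardU := Finset.card_union_le
        (Finset.univ.filter fun k : Fin (N - 1) => ((k : ℕ) + 1 = (jF : ℕ)))
        (Finset.univ.filter fun k : Fin (N - 1) => g ((k : ℕ) + 1) = (jF : ℕ))
      set j : ℕ := (jF : ℕ) with hj
      rcases Nat.eq_zero_or_pos j with hj0 | hjpos
      · -- j = 0 : first filter empty, second ≤ d 0
        have hc1 : (Finset.univ.filter fun k : Fin (N - 1) => ((k : ℕ) + 1 = j)).card = 0 := by
          rw [Finset.card_eq_zero, Finset.filter_eq_empty_iff]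
          intro k _
          omega
        have hc2 : (Finset.univ.filter fun k : Fin (N - 1) => g ((k : ℕ) + 1) = j).card ≤ d 0 := by
          have hmap : ∀ k ∈ (Finset.univ.filter fun k : Fin (N - 1) => g ((k : ℕ) + 1) = j),
              (k : ℕ) + 1 ∈ Finset.Icc 1 (A 0) := by
            intro k hk
            simp only [Finset.mem_filter, Finset.mem_univ, true_and] at hk
            obtain ⟨hk1, hk2⟩ := hkbound k
            obtain ⟨hgs, _, _⟩ := hgspec ((k : ℕ) + 1) hk1 hk2
            rw [hk, hj0] at hgs
            simp only [Finset.mem_Icc]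
            omega
          have hinj := Finset.card_le_card_of_injOn (fun k : Fin (N - 1) => (k : ℕ) + 1)
            hmap (by
              intro a _ b _ hab
              have hab' : (a : ℕ) + 1 = (b : ℕ) + 1 := hab
              exact Fin.ext (by omega))
          have hA0 : A 0 = d 0 := by rw [hA]; simp
          rw [Nat.card_Icc] at hinj
          omega
        have hd0 : d 0 = r i := by rw [← hdj, hj0]
        omega
      · -- j ≥ 1
        have hc1 : (Finset.univ.filter fun k : Fin (N - 1) => ((k : ℕ) + 1 = j)).card ≤ 1 := by
          rw [Finset.card_le_one]
          intro a ha b hb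
          simp only [Finset.mem_filter, Finset.mem_univ, true_and] at ha hb
          exact Fin.ext (by omega)
        have hc2 : (Finset.univ.filter fun k : Fin (N - 1) => g ((k : ℕ) + 1) = j).card
            ≤ d j - 1 := by
          have hmap : ∀ k ∈ (Finset.univ.filter fun k : Fin (N - 1) => g ((k : ℕ) + 1) = j),
              (k : ℕ) + 1 ∈ Finset.Ioc (A (j - 1) - (j - 1)) (A j - j) := by
            intro k hk
            simp only [Finset.mem_filter, Finset.mem_univ, true_and] at hk
            obtain ⟨hk1, hk2⟩ := hkbound k
            obtain ⟨hgs, _, hgmin⟩ := hgspec ((k : ℕ) + 1) hk1 hk2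
            rw [hk] at hgs
            have hmin := hgmin (j - 1) (by omega)
            simp only [Finset.mem_Ioc]
            omega
          have hinj := Finset.card_le_card_of_injOn (fun k : Fin (N - 1) => (k : ℕ) + 1)
            hmap (by
              intro a _ b _ hab
              have hab' : (a : ℕ) + 1 = (b : ℕ) + 1 := hab
              exact Fin.ext (by omega))
          rw [Nat.card_Ioc] at hinj
          have hAj : A j = A (j - 1) + d j := by
            have := hAsucc (j - 1)
            have hj1 : j - 1 + 1 = j := by omega
            rw [hj1] at this
            exact this
          have := hAge (j - 1)
          omega
        have := hd1 j
        omega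
    -- the hyperplane
    set S : (Fin N → q) →ₗ[q] q :=
      { toFun := fun x => ∑ i, x i
        map_add' := by intro x y; simp [Finset.sum_add_distrib]
        map_smul' := by intro c x; simp [Finset.mul_sum] } with hS
    have hSsurj : LinearMap.range S = ⊤ := by
      rw [LinearMap.range_eq_top]
      intro c
      refine ⟨Pi.single (⟨0, hN0⟩ : Fin N) c, ?_⟩
      rw [hS]
      simp
    have hKer : finrank q (LinearMap.ker S) = N - 1 := by
      have h1 := S.finrank_range_add_finrank_ker
      rw [hSsurj, finrank_top, Module.finrank_self, Module.finrank_pi, Fintype.card_fin] at h1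
      omega
    have hspanle : Submodule.span q (Set.range fun k (i : Fin N) => C i k) ≤ LinearMap.ker S := by
      rw [Submodule.span_le]
      rintro _ ⟨k, rfl⟩
      rw [SetLike.mem_coe, LinearMap.mem_ker]
      rw [hS]
      exact hcolsum k
    have hspaneq : Submodule.span q (Set.range fun k (i : Fin N) => C i k) = LinearMap.ker S := by
      apply Submodule.eq_of_le_of_finrank_le hspanle
      rw [hKer, finrank_span_eq_card hCindep, Fintype.card_fin]
    have hb : ∀ jj : Fin N, ∃ b : Fin (N - 1) → q,
        ∑ k, b k • (fun i => C i k) =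
          (fun i => (if i = jj then (1 : q) else 0) - (if i = π.symm jj then 1 else 0)) := by
      intro jj
      rw [← mem_span_range_iff_exists_fun, hspaneq, LinearMap.mem_ker]
      show (∑ i : Fin N, ((if i = jj then (1 : q) else 0) - (if i = π.symm jj then 1 else 0))) = 0
      rw [Finset.sum_sub_distrib]
      rw [Finset.sum_ite_eq' Finset.univ, Finset.sum_ite_eq' Finset.univ]
      simp
    choose b hbspec using hb
    refine ⟨N - 1, fun jj k => b jj k, Rf, le_refl _, ?_, hRcard⟩
    intro i
    refine ⟨fun m => if m = π i then (-1 : q) else 0, ?_, ?_⟩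
    · intro j' hj'
      by_cases h : j' = π i
      · exact Finset.mem_singleton.mpr h
      · exact absurd (if_neg h) hj'
    · have huniv : ∑ k : Fin (N - 1), C i k • (fun jj => b jj k)
          = (fun m => if m = π i then (-1 : q) else 0) + Pi.single i 1 := by
        funext m
        simp only [Finset.sum_apply, Pi.smul_apply, smul_eq_mul, Pi.add_apply]
        have h1 := congrFun (hbspec m) i
        simp only [Finset.sum_apply, Pi.smul_apply, smul_eq_mul] at h1
        rw [show ∑ k, C i k * b m k = ∑ k, b m k * C i k from
          Finset.sum_congr rfl fun k _ => mul_comm _ _, h1]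
        rcases eq_or_ne m i with rfl | hmi
        · rw [if_pos rfl, if_neg, Pi.single_eq_same, if_neg]
          · ring
          · intro h
            exact hne m h.symm
          · intro h
            apply hne m
            have := congrArg π h
            rw [Equiv.apply_symm_apply] at this
            exact this
        · rw [if_neg (Ne.symm hmi), Pi.single_eq_of_ne hmi]
          rcases eq_or_ne m (π i) with rfl | hmp
          · rw [if_pos (by rw [Equiv.symm_apply_apply]), if_pos rfl]
            ring
          · rw [if_neg, if_neg hmp]
            · ring
            · intro h
              apply hmp
              have := congrArg π h
              rw [Equiv.apply_symm_apply] at this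
              exact this.symm
      have hRfsum : ∑ k ∈ Rf i, C i k • (fun jj => b jj k)
          = ∑ k : Fin (N - 1), C i k • (fun jj => b jj k) := by
        apply Finset.sum_subset (Finset.subset_univ _)
        intro k _ hk
        rw [hRf] at hk
        simp only [Finset.mem_filter, Finset.mem_univ, true_and, not_not] at hk
        rw [hk, zero_smul]
      have hgoal : (fun m => if m = π i then (-1 : q) else 0) + Pi.single i 1
          = ∑ k ∈ Rf i, C i k • (fun jj => b jj k) := by
        rw [hRfsum, huniv]
      rw [hgoal]
      apply Submodule.sum_mem
      intro k hk
      apply Submodule.smul_mem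
      apply Submodule.subset_span
      exact Set.mem_image_of_mem _ hk
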